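/- Let D be a real graded division algebra with D_e ≅ ℂ, K ≠ T, and a degree-preserving involution φ_0 restricting to conjugation on D_e, with T an elementary 2-group and normalized elements X_t with X_t² = μ(t) ∈ {±1}. Extend β to T × K by X_u X_t = β(u,t) X_t X_u. Then β takes values in {±1} on T × K, is multiplicative in the first variable, and satisfies β(u,t) = μ(ut)μ(u)μ(t) = η(ut)η(u)δ for all u ∈ T∖K and t ∈ K. In particular, if η and μ coincide on T∖K then they coincide on all of T. -/

import Mathlib

variable {G : Type*} [CommGroup G] [DecidableEq G] {D : Type*} [Ring D] [Algebra ℝ D]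

/-- A real graded division algebra. -/
def IsGDA (comp : G → Submodule ℝ D) : Prop :=
  DirectSum.IsInternal comp ∧ (1 : D) ∈ comp 1 ∧
    (∀ (g h : G) (a b : D), a ∈ comp g → b ∈ comp h → a * b ∈ comp (g * h)) ∧
    ∀ (g : G) (a : D), a ∈ comp g → a ≠ 0 → IsUnit a

/-- `t` belongs to `K`, i.e. `Int(X_t)` restricts to the identity on `D_e`. -/
def Kmem (comp : G → Submodule ℝ D) {T : Subgroup G} (X : ↥T → Dˣ) (t : ↥T) : Prop :=
  ∀ z ∈ comp (1 : G), (X t : D) * z = z * (X t : D)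

set_option maxHeartbeats 1600000 in
/-- Let `D` be a real graded division algebra with `D_e ≅ ℂ`, `K ≠ T`, elementary
2-group support `T`, normalized elements `X_t` with `X_t² = μ(t) ∈ {±1}`, and a
degree-preserving involution `φ₀` restricting to the conjugation on `D_e` with
`φ₀(X_t) = η(t) X_t` and `η = δ` on `K`. Extend `β` to `T × K` by
`X_u X_t = β(u,t) X_t X_u`. Then `β` takes values in `{±1}` on `T × K`, is
multiplicative in the first variable, and satisfies
`β(u,t) = μ(ut)μ(u)μ(t) = η(ut)η(u)δ` for `u ∈ T ∖ K`, `t ∈ K`. In particular,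
if `η` and `μ` coincide on `T ∖ K` then they coincide on all of `T`. -/
theorem stmt_14 (comp : G → Submodule ℝ D) (hgda : IsGDA comp)
    (hfd : FiniteDimensional ℝ ↥(comp (1 : G)))
    -- `D_e ≅ ℂ`
    (hcomm : ∀ z ∈ comp (1 : G), ∀ w ∈ comp (1 : G), z * w = w * z)
    (hrank : Module.finrank ℝ ↥(comp (1 : G)) = 2)
    (T : Subgroup G) (hT : ∀ g : G, comp g ≠ ⊥ ↔ g ∈ T)
    (h2 : ∀ t : ↥T, (t : G) * t = 1)
    (X : ↥T → Dˣ) (hX : ∀ t : ↥T, (X t : D) ∈ comp (t : G))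
    (μ : ↥T → ℝ) (hμ : ∀ t : ↥T, μ t = 1 ∨ μ t = -1)
    (hXsq : ∀ t : ↥T, (X t : D) * (X t : D) = algebraMap ℝ D (μ t))
    (φ : D ≃ₗ[ℝ] D)
    (hanti : ∀ x y : D, φ (x * y) = φ y * φ x)
    (hinvol : ∀ x : D, φ (φ x) = x)
    (hgr : ∀ (g : G), ∀ x ∈ comp g, φ x ∈ comp g)
    (hconj : ∀ z ∈ comp (1 : G),
      (∃ r : ℝ, z + φ z = algebraMap ℝ D r) ∧ ∃ r : ℝ, 0 ≤ r ∧ z * φ z = algebraMap ℝ D r)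
    (η : ↥T → ℝ) (hη : ∀ t : ↥T, η t = 1 ∨ η t = -1)
    (hφX : ∀ t : ↥T, φ (X t : D) = η t • (X t : D))
    (δ : ℝ) (hδ : δ = 1 ∨ δ = -1)
    (hKη : ∀ t : ↥T, Kmem comp X t → η t = δ)
    -- `K ≠ T`
    (hKproper : ∃ u : ↥T, ¬Kmem comp X u)
    (β : ↥T → ↥T → D)
    (hβ : ∀ u t : ↥T, Kmem comp X t →
      (X u : D) * (X t : D) = β u t * ((X t : D) * (X u : D))) :
    (∀ u t : ↥T, Kmem comp X t → (β u t = 1 ∨ β u t = -1)) ∧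
    (∀ u v t : ↥T, Kmem comp X t → β (u * v) t = β u t * β v t) ∧
    (∀ u t : ↥T, ¬Kmem comp X u → Kmem comp X t →
      β u t = algebraMap ℝ D (μ (u * t) * μ u * μ t) ∧
        β u t = algebraMap ℝ D (η (u * t) * η u * δ)) ∧
    ((∀ u : ↥T, ¬Kmem comp X u → η u = μ u) → ∀ t : ↥T, η t = μ t) := by
  classical
  obtain ⟨-, hone, hmul, hunit⟩ := hgda
  set C := algebraMap ℝ D with hCdef
  haveI hnt : Nontrivial D := by
    by_contra h
    rw [not_nontrivial_iff_subsingleton] at h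
    haveI : Subsingleton ↥(comp (1:G)) := ⟨fun a b => Subtype.ext (Subsingleton.elim _ _)⟩
    rw [Module.finrank_zero_of_subsingleton] at hrank
    exact absurd hrank (by norm_num)
  have hinj : Function.Injective C := RingHom.injective _
  have hCc : ∀ (r : ℝ) (x : D), C r * x = x * C r := fun r x => Algebra.commutes r x
  have hCC : ∀ r s : ℝ, C r * C s = C (r*s) := fun r s => (map_mul C r s).symm
  have hC1 : C 1 = 1 := map_one C
  have hCc' : ∀ (r : ℝ) (x y : D), x * (C r * y) = C r * (x * y) := fun r x y => by
    rw [← mul_assoc, ← hCc, mul_assoc]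
  have sq1 : ∀ r : ℝ, (r = 1 ∨ r = -1) → r * r = 1 := by rintro r (rfl|rfl) <;> norm_num
  have prodsgn : ∀ r s : ℝ, (r = 1 ∨ r = -1) → (s = 1 ∨ s = -1) → (r*s = 1 ∨ r*s = -1) := by
    rintro r s (rfl|rfl) (rfl|rfl) <;> norm_num
  have hCmul_mem : ∀ (r : ℝ) (g : G) (x : D), x ∈ comp g → C r * x ∈ comp g := fun r g x hx => by
    rw [hCdef, ← Algebra.smul_def]; exact Submodule.smul_mem _ _ hx
  have hCmemE : ∀ r : ℝ, C r ∈ comp (1:G) := fun r => by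
    have := hCmul_mem r 1 1 hone; rwa [mul_one] at this
  have hcanR : ∀ (P : Dˣ) (a b : D), a * ↑P = b * ↑P → a = b := by
    intro P a b h
    have h2 := congrArg (fun y => y * (↑P⁻¹ : D)) h
    simpa using h2
  have hXsq' : ∀ (t : ↥T) (y : D), (X t:D) * ((X t:D) * y) = C (μ t) * y := fun t y => by
    rw [← mul_assoc, hXsq t]
  have hXinv : ∀ t : ↥T, (((X t)⁻¹ : Dˣ) : D) = C (μ t) * (X t : D) := by
    intro t
    refine Units.inv_eq_of_mul_eq_one_right ?_
    calc (X t : D) * (C (μ t) * (X t:D)) = C (μ t) * ((X t:D) * (X t:D)) := hCc' _ _ _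
      _ = C (μ t) * C (μ t) := by rw [hXsq t]
      _ = 1 := by rw [hCC, sq1 _ (hμ t), hC1]
  have hXinvmem : ∀ t : ↥T, (((X t)⁻¹ : Dˣ) : D) ∈ comp (t : G) := fun t => by
    rw [hXinv t]; exact hCmul_mem _ _ _ (hX t)
  have h2' : ∀ t : ↥T, t * t = 1 := fun t => Subtype.ext (by simpa using h2 t)
  -- φ basics
  have hφ1 : φ (1:D) = 1 := by
    have key : ∀ x : D, φ x = φ 1 * φ x := fun x => by rw [← hanti x 1, mul_one]
    have h := key (φ.symm 1)
    rw [LinearEquiv.apply_symm_apply, mul_one] at h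
    exact h.symm
  have hφC : ∀ r : ℝ, φ (C r) = C r := fun r => by
    rw [hCdef, Algebra.algebraMap_eq_smul_one, map_smul, hφ1]
  -- construct i with i * i = -1
  obtain ⟨z, hzE, hz⟩ : ∃ z ∈ comp (1:G), ∀ r : ℝ, z ≠ C r := by
    by_contra hcon
    push_neg at hcon
    have hle : comp (1:G) ≤ Submodule.span ℝ {(1:D)} := by
      intro y hy
      obtain ⟨r, hr⟩ := hcon y hy
      rw [Submodule.mem_span_singleton]
      exact ⟨r, by rw [hr, hCdef, Algebra.algebraMap_eq_smul_one]⟩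
    have hfin := Submodule.finrank_mono (R := ℝ) hle
    rw [hrank, finrank_span_singleton (one_ne_zero (α := D))] at hfin
    omega
  obtain ⟨⟨r, hr⟩, -⟩ := hconj z hzE
  set w : D := z - C (r/2) with hwdef
  have hwE : w ∈ comp (1:G) := Submodule.sub_mem _ hzE (hCmemE _)
  have hφw : φ w = -w := by
    have hz' : φ z = C r - z := eq_sub_of_add_eq' hr
    have hrr : C r = C (r/2) + C (r/2) := by rw [← map_add]; norm_num
    rw [hwdef, map_sub, hz', hφC, hrr]
    abel
  have hwne : w ≠ 0 := fun h0 => hz (r/2) (sub_eq_zero.mp h0)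
  obtain ⟨-, s, hs0, hws⟩ := hconj w hwE
  have hwsq : w * w = C (-s) := by
    rw [hφw, mul_neg] at hws
    rw [map_neg, ← hws, neg_neg]
  have hsne : s ≠ 0 := by
    intro h0
    subst h0
    have hww : w * w = 0 := by rw [hwsq]; simp
    exact hwne ((hunit _ _ hwE hwne).mul_left_cancel (by rw [hww, mul_zero]))
  have hspos : 0 < s := lt_of_le_of_ne hs0 (Ne.symm hsne)
  set q : ℝ := Real.sqrt s with hqdef
  have hqq : q * q = s := Real.mul_self_sqrt hs0
  have hqne : q ≠ 0 := ne_of_gt (Real.sqrt_pos.mpr hspos)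
  set i : D := q⁻¹ • w with hidef
  have hiE : i ∈ comp (1:G) := Submodule.smul_mem _ _ hwE
  have hisq : i * i = C (-1) := by
    rw [hidef, Algebra.smul_def, ← hCdef]
    calc (C q⁻¹ * w) * (C q⁻¹ * w) = C q⁻¹ * (w * (C q⁻¹ * w)) := mul_assoc _ _ _
      _ = C q⁻¹ * (C q⁻¹ * (w*w)) := by rw [hCc']
      _ = C (q⁻¹ * q⁻¹) * (w*w) := by rw [← mul_assoc, hCC]
      _ = C (q⁻¹ * q⁻¹) * C (-s) := by rw [hwsq]
      _ = C ((q⁻¹ * q⁻¹) * -s) := hCC _ _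
      _ = C (-1) := by rw [show (q⁻¹ * q⁻¹) * -s = -1 from by rw [← hqq]; field_simp]
  have hisq' : i * i = -1 := by rw [hisq, map_neg, hC1]
  have hφi : φ i = -i := by rw [hidef, map_smul, hφw, smul_neg]
  have hine : i ≠ 0 := by
    intro h0
    apply hwne
    have hqi : q • i = w := by rw [hidef, smul_smul, mul_inv_cancel₀ hqne, one_smul]
    rw [← hqi, h0, smul_zero]
  -- the complex embedding
  set ψ : ℂ →ₐ[ℝ] D := Complex.liftAux i hisq' with hψdef
  have hψI : ψ Complex.I = i := Complex.liftAux_apply_I i hisq'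
  have hψr : ∀ r' : ℝ, ψ (r' : ℂ) = C r' := fun r' => by
    rw [show ((r' : ℂ)) = algebraMap ℝ ℂ r' from rfl, AlgHom.commutes, hCdef]
  have hψ : ∀ c : ℂ, ψ c = C c.re + C c.im * i := by
    intro c
    conv_lhs => rw [← Complex.re_add_im c]
    rw [map_add, map_mul, hψI, hψr, hψr]
  have hψE : ∀ c : ℂ, ψ c ∈ comp (1:G) := fun c => by
    rw [hψ]
    exact Submodule.add_mem _ (hCmemE _) (hCmul_mem _ _ _ hiE)
  -- D_e is exactly the image of ψ
  have hEψ : ∀ y ∈ comp (1:G), ∃ c : ℂ, y = ψ c := by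
    intro y hy
    set one' : ↥(comp (1:G)) := ⟨1, hone⟩ with hone'
    set i' : ↥(comp (1:G)) := ⟨i, hiE⟩ with hi'
    have hli : LinearIndependent ℝ ![one', i'] := by
      rw [LinearIndependent.pair_iff]
      intro a b hab
      have hab' : ψ ((a:ℂ) + (b:ℂ) * Complex.I) = 0 := by
        have hval := congrArg Subtype.val hab
        simp only [Submodule.coe_add, SetLike.val_smul, ZeroMemClass.coe_zero, hone', hi'] at hval
        rw [Algebra.smul_def, Algebra.smul_def, mul_one, ← hCdef] at hval
        rw [hψ]
        simpa using hval
      have hns : C (Complex.normSq ((a:ℂ) + (b:ℂ) * Complex.I)) = C 0 := by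
        rw [map_zero, ← hψr, ← Complex.mul_conj, map_mul, hab', zero_mul]
      have := Complex.normSq_eq_zero.mp (hinj hns)
      constructor
      · simpa using congrArg Complex.re this
      · simpa using congrArg Complex.im this
    have hsp := hli.span_eq_top_of_card_eq_finrank (by rw [hrank, Fintype.card_fin])
    have hy' : (⟨y, hy⟩ : ↥(comp (1:G))) ∈ Submodule.span ℝ (Set.range ![one', i']) := by
      rw [hsp]; trivial
    rw [show Set.range ![one', i'] = {one', i'} from by
      ext x; simp [Matrix.range_cons, Matrix.range_empty, or_comm]] at hy'
    rw [Submodule.mem_span_pair] at hy'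
    obtain ⟨a, b, hab⟩ := hy'
    refine ⟨(a:ℂ) + (b:ℂ) * Complex.I, ?_⟩
    have hval := congrArg Subtype.val hab
    simp only [Submodule.coe_add, SetLike.val_smul, hone', hi'] at hval
    rw [hψ]
    rw [Algebra.smul_def, Algebra.smul_def, mul_one, ← hCdef] at hval
    simpa using hval.symm
  have hφψ : ∀ c : ℂ, φ (ψ c) = ψ (starRingEnd ℂ c) := by
    intro c
    rw [hψ, hψ, map_add]
    have h1 : φ (C c.re) = C c.re := hφC _
    have h2 : φ (C c.im * i) = -(C c.im * i) := by
      rw [hanti, hφi, hφC, neg_mul, ← hCc]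
    rw [h1, h2, Complex.conj_re, Complex.conj_im, map_neg, neg_mul]
  -- anticommutation of X_u with i for u outside K
  have hanti_i : ∀ u : ↥T, ¬Kmem comp X u → (X u : D) * i = -(i * (X u:D)) := by
    intro u hu
    set j : D := (X u:D) * i * (((X u)⁻¹ : Dˣ) : D) with hjdef
    have hjE : j ∈ comp (1:G) := by
      have hm := hmul _ _ _ _ (hmul _ _ _ _ (hX u) hiE) (hXinvmem u)
      rwa [show ((u:G) * 1) * (u:G) = 1 from by rw [mul_one]; exact h2 u] at hm
    have hjX : j * (X u:D) = (X u:D) * i := by rw [hjdef, Units.inv_mul_cancel_right]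
    have hjj : j * j = C (-1) := by
      calc j * j = (X u:D) * (i * ((((X u)⁻¹ : Dˣ):D) * ((X u:D) * (i * (((X u)⁻¹ : Dˣ):D))))) := by
            rw [hjdef]; simp only [mul_assoc]
        _ = (X u:D) * (i * (i * (((X u)⁻¹ : Dˣ):D))) := by rw [Units.inv_mul_cancel_left]
        _ = (X u:D) * ((i * i) * (((X u)⁻¹ : Dˣ):D)) := by rw [mul_assoc]
        _ = (X u:D) * (C (-1) * (((X u)⁻¹ : Dˣ):D)) := by rw [hisq]
        _ = C (-1) * ((X u:D) * (((X u)⁻¹ : Dˣ):D)) := hCc' _ _ _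
        _ = C (-1) := by rw [Units.mul_inv, mul_one]
    have hcommji : j * i = i * j := hcomm j hjE i hiE
    have hfac : (j - i) * (j + i) = 0 := by
      rw [sub_mul, mul_add, mul_add, hjj, hisq, hcommji]; abel
    by_cases hji : j = i
    · exfalso
      apply hu
      intro z' hz'E
      obtain ⟨c, rfl⟩ := hEψ z' hz'E
      have hXi : (X u:D) * i = i * (X u:D) := by
        have h := congrArg (fun y => y * (X u:D)) hji
        rw [hjX] at h
        exact h
      rw [hψ, mul_add, add_mul]
      congr 1
      · rw [← hCc]
      · rw [hCc', hXi, ← mul_assoc]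
    · have hne : j - i ≠ 0 := sub_ne_zero.mpr hji
      have hium := hunit _ _ (Submodule.sub_mem _ hjE hiE) hne
      have hsum : j + i = 0 := hium.mul_left_cancel (by rw [hfac, mul_zero])
      have hjni : j = -i := eq_neg_of_add_eq_zero_left hsum
      have h := congrArg (fun y => y * (X u:D)) hjni
      rw [hjX] at h
      rw [h, neg_mul]
  have hanti_ψ : ∀ u : ↥T, ¬Kmem comp X u → ∀ c : ℂ,
      (X u:D) * ψ c = ψ (starRingEnd ℂ c) * (X u:D) := by
    intro u hu c
    rw [hψ, hψ, mul_add, add_mul, Complex.conj_re, Complex.conj_im]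
    congr 1
    · rw [← hCc]
    · rw [hCc', hanti_i u hu, map_neg, neg_mul, neg_mul, mul_neg, mul_assoc]
  -- key computation for part 1
  have key1 : ∀ u t : ↥T, Kmem comp X t →
      ((X u : D) * (X t : D)) * ((X u : D) * (X t : D)) = β u t * C (μ u * μ t) := by
    intro u t ht
    nth_rewrite 1 [hβ u t ht]
    simp only [mul_assoc]
    rw [hXsq' u, hCc', hXsq t, hCC]
  have hβE : ∀ u t : ↥T, Kmem comp X t → β u t ∈ comp (1:G) := by
    intro u t ht
    have hsq : ((X u:D)*(X t:D)) * ((X u:D)*(X t:D)) ∈ comp (1:G) := by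
      have hm := hmul _ _ _ _ (hmul _ _ _ _ (hX u) (hX t)) (hmul _ _ _ _ (hX u) (hX t))
      rwa [show ((u:G)*(t:G)) * ((u:G)*(t:G)) = 1 from by simpa using h2 (u*t)] at hm
    have hb : β u t = C (μ u * μ t) * (((X u:D)*(X t:D)) * ((X u:D)*(X t:D))) := by
      rw [key1 u t ht, ← hCc, ← mul_assoc, hCC, sq1 _ (prodsgn _ _ (hμ u) (hμ t)), hC1, one_mul]
    rw [hb]
    exact hCmul_mem _ _ _ hsq
  have hβsq : ∀ u t : ↥T, Kmem comp X t → β u t * β u t = 1 := by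
    intro u t ht
    have hcomm_t : (X t : D) * β u t = β u t * (X t:D) := ht _ (hβE u t ht)
    have e1 : (X u:D) * ((X t:D) * (X t:D)) = (β u t * β u t) * (C (μ t) * (X u:D)) := by
      calc (X u:D) * ((X t:D)*(X t:D))
          = ((X u:D) * (X t:D)) * (X t:D) := (mul_assoc _ _ _).symm
        _ = (β u t * ((X t:D)*(X u:D))) * (X t:D) := by rw [hβ u t ht]
        _ = β u t * ((X t:D) * ((X u:D) * (X t:D))) := by simp only [mul_assoc]
        _ = β u t * ((X t:D) * (β u t * ((X t:D)*(X u:D)))) := by rw [hβ u t ht]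
        _ = β u t * (((X t:D) * β u t) * ((X t:D)*(X u:D))) := by rw [mul_assoc]
        _ = β u t * ((β u t * (X t:D)) * ((X t:D)*(X u:D))) := by rw [hcomm_t]
        _ = (β u t * β u t) * ((X t:D) * ((X t:D)*(X u:D))) := by simp only [mul_assoc]
        _ = (β u t * β u t) * (C (μ t) * (X u:D)) := by rw [hXsq' t]
    have e2 : (X u:D) * ((X t:D)*(X t:D)) = C (μ t) * (X u:D) := by rw [hXsq t, ← hCc]
    have hCu : IsUnit (C (μ t)) := by
      rcases hμ t with h|h <;> rw [h]
      · rw [hC1]; exact isUnit_one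
      · rw [map_neg, hC1]; exact isUnit_one.neg
    have hXu : IsUnit (C (μ t) * (X u:D)) := hCu.mul (X u).isUnit
    have e3 : (β u t * β u t) * (C (μ t) * (X u:D)) = 1 * (C (μ t) * (X u:D)) := by
      rw [← e1, e2, one_mul]
    exact hXu.mul_right_cancel e3
  have p1 : ∀ u t : ↥T, Kmem comp X t → β u t = 1 ∨ β u t = -1 := by
    intro u t ht
    by_cases h1 : β u t = 1
    · exact Or.inl h1
    · right
      have hfac : (β u t - 1) * (β u t + 1) = 0 := by
        rw [sub_mul, mul_add, mul_add, hβsq u t ht]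
        simp only [mul_one, one_mul]
        abel
      have hne : β u t - 1 ≠ 0 := sub_ne_zero.mpr h1
      have hium := hunit _ _ (Submodule.sub_mem _ (hβE u t ht) hone) hne
      have hsum : β u t + 1 = 0 := hium.mul_left_cancel (by rw [hfac, mul_zero])
      exact eq_neg_of_add_eq_zero_left hsum
    -- K is closed under multiplication
  have hKmul : ∀ a b : ↥T, Kmem comp X a → Kmem comp X b → Kmem comp X (a*b) := by
    intro a b ha hb z' hz'E
    have hPinv_mem : (((X a * X b)⁻¹ : Dˣ) : D) ∈ comp ((a:G)*(b:G)) := by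
      rw [mul_inv_rev, Units.val_mul]
      have hm := hmul _ _ _ _ (hXinvmem b) (hXinvmem a)
      rwa [mul_comm (b:G) (a:G)] at hm
    set e : D := (X (a*b) : D) * (((X a * X b)⁻¹ : Dˣ) : D) with hedef
    have heE : e ∈ comp (1:G) := by
      have hm := hmul _ _ _ _ (hX (a*b)) hPinv_mem
      rwa [show ((a*b : ↥T):G) * ((a:G)*(b:G)) = 1 from by simpa using h2 (a*b)] at hm
    have heX : e * ((X a:D) * (X b:D)) = (X (a*b) : D) := by
      calc e * ((X a:D)*(X b:D))
          = (X (a*b):D) * ((((X a * X b)⁻¹ : Dˣ):D) * (((X a * X b : Dˣ)):D)) := by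
            rw [hedef, Units.val_mul, mul_assoc]
        _ = (X (a*b):D) := by rw [Units.inv_mul, mul_one]
    calc (X (a*b) : D) * z'
        = e * (((X a:D) * (X b:D)) * z') := by
          rw [← heX, mul_assoc e ((X a:D) * (X b:D)) z']
      _ = e * ((X a:D) * (z' * (X b:D))) := by
          rw [mul_assoc (X a:D) (X b:D) z', hb z' hz'E]
      _ = e * (z' * ((X a:D) * (X b:D))) := by
          rw [← mul_assoc (X a:D) z' (X b:D), ha z' hz'E, mul_assoc z' (X a:D) (X b:D)]
      _ = z' * (e * ((X a:D) * (X b:D))) := by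
          rw [← mul_assoc e z' ((X a:D) * (X b:D)), hcomm e heE z' hz'E,
            mul_assoc z' e ((X a:D) * (X b:D))]
      _ = z' * (X (a*b) : D) := by rw [heX]
  -- part 3
  have p3 : ∀ u t : ↥T, ¬Kmem comp X u → Kmem comp X t →
      β u t = C (μ (u*t) * μ u * μ t) ∧ β u t = C (η (u*t) * η u * δ) := by
    intro u t hu ht
    have hut : ¬Kmem comp X (u*t) := by
      intro h
      apply hu
      have hm := hKmul (u*t) t h ht
      rwa [mul_assoc, h2' t, mul_one] at hm
    have hPinvmem : (((X (u*t))⁻¹ : Dˣ) : D) ∈ comp (((u*t) : ↥T) : G) := hXinvmem (u*t)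
    set d : D := ((X u:D) * (X t:D)) * (((X (u*t))⁻¹ : Dˣ) : D) with hddef
    have hdE : d ∈ comp (1:G) := by
      have hm0 : (X u:D) * (X t:D) ∈ comp (((u*t):↥T):G) := by
        simpa using hmul _ _ _ _ (hX u) (hX t)
      have hm := hmul _ _ _ _ hm0 hPinvmem
      rwa [h2 (u*t)] at hm
    have hdX : d * (X (u*t) : D) = (X u:D) * (X t:D) := by
      rw [hddef, Units.inv_mul_cancel_right]
    obtain ⟨dc, hdc⟩ := hEψ d hdE
    have hdX' : ψ dc * (X (u*t) : D) = (X u:D) * (X t:D) := by rw [← hdc]; exact hdX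
    have hPP2 : ((X u:D)*(X t:D)) * ((X u:D)*(X t:D)) = C (Complex.normSq dc * μ (u*t)) := by
      calc ((X u:D)*(X t:D)) * ((X u:D)*(X t:D))
          = (ψ dc * (X (u*t):D)) * (ψ dc * (X (u*t):D)) := by rw [hdX']
        _ = ψ dc * (((X (u*t):D) * ψ dc) * (X (u*t):D)) := by simp only [mul_assoc]
        _ = ψ dc * ((ψ (starRingEnd ℂ dc) * (X (u*t):D)) * (X (u*t):D)) := by
            rw [hanti_ψ (u*t) hut dc]
        _ = (ψ dc * ψ (starRingEnd ℂ dc)) * ((X (u*t):D) * (X (u*t):D)) := by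
            simp only [mul_assoc]
        _ = ψ (dc * starRingEnd ℂ dc) * C (μ (u*t)) := by rw [← map_mul, hXsq (u*t)]
        _ = C (Complex.normSq dc) * C (μ (u*t)) := by rw [Complex.mul_conj, hψr]
        _ = C (Complex.normSq dc * μ (u*t)) := hCC _ _
    obtain ⟨c', hc'pm, hc'⟩ : ∃ c' : ℝ, (c' = 1 ∨ c' = -1) ∧ β u t = C c' := by
      rcases p1 u t ht with h | h
      · exact ⟨1, Or.inl rfl, by rw [h, hC1]⟩
      · exact ⟨-1, Or.inr rfl, by rw [h, map_neg, hC1]⟩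
    have h12 : C (c' * (μ u * μ t)) = C (Complex.normSq dc * μ (u*t)) := by
      rw [← hCC, ← hc', ← key1 u t ht, hPP2]
    have hreal := hinj h12
    have hn0 : (0:ℝ) ≤ Complex.normSq dc := Complex.normSq_nonneg dc
    have hμfin : c' = μ (u*t) * μ u * μ t := by
      rcases hμ u with h1|h1 <;> rcases hμ t with hh2|hh2 <;> rcases hμ (u*t) with h3|h3 <;>
        rcases hc'pm with h4|h4 <;> rw [h1, hh2, h3, h4] at hreal ⊢ <;> linarith [hn0]
    refine ⟨by rw [hc', hμfin], ?_⟩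
    -- now the η identity
    have hXtXu : (X t:D) * (X u:D) = C c' * ((X u:D) * (X t:D)) := by
      have hb := hβ u t ht
      rw [hc'] at hb
      calc (X t:D)*(X u:D) = C (c'*c') * ((X t:D)*(X u:D)) := by
            rw [sq1 c' hc'pm, hC1, one_mul]
        _ = C c' * (C c' * ((X t:D)*(X u:D))) := by rw [← hCC, mul_assoc]
        _ = C c' * ((X u:D) * (X t:D)) := by rw [← hb]
    have hφP1 : φ ((X u:D) * (X t:D)) = C (δ * η u * c') * ((X u:D) * (X t:D)) := by
      calc φ ((X u:D) * (X t:D)) = φ (X t:D) * φ (X u:D) := hanti _ _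
        _ = (η t • (X t:D)) * (η u • (X u:D)) := by rw [hφX t, hφX u]
        _ = (C (η t) * (X t:D)) * (C (η u) * (X u:D)) := by
            rw [Algebra.smul_def, Algebra.smul_def, hCdef]
        _ = C (η t * η u) * ((X t:D) * (X u:D)) := by
            rw [mul_assoc, hCc' (η u), ← mul_assoc, hCC]
        _ = C (η t * η u) * (C c' * ((X u:D) * (X t:D))) := by rw [hXtXu]
        _ = C (η t * η u * c') * ((X u:D) * (X t:D)) := by rw [← mul_assoc, hCC]
        _ = C (δ * η u * c') * ((X u:D) * (X t:D)) := by rw [hKη t ht]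
    have hφP2 : φ ((X u:D) * (X t:D)) = C (η (u*t)) * ((X u:D) * (X t:D)) := by
      calc φ ((X u:D) * (X t:D)) = φ (ψ dc * (X (u*t):D)) := by rw [hdX']
        _ = φ (X (u*t):D) * φ (ψ dc) := hanti _ _
        _ = (η (u*t) • (X (u*t):D)) * ψ (starRingEnd ℂ dc) := by rw [hφX, hφψ]
        _ = C (η (u*t)) * ((X (u*t):D) * ψ (starRingEnd ℂ dc)) := by
            rw [Algebra.smul_def, hCdef, mul_assoc]
        _ = C (η (u*t)) * (ψ (starRingEnd ℂ (starRingEnd ℂ dc)) * (X (u*t):D)) := by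
            rw [hanti_ψ (u*t) hut]
        _ = C (η (u*t)) * (ψ dc * (X (u*t):D)) := by rw [Complex.conj_conj]
        _ = C (η (u*t)) * ((X u:D) * (X t:D)) := by rw [hdX']
    have hCeq : C (δ * η u * c') = C (η (u*t)) := by
      refine hcanR (X u * X t) _ _ ?_
      rw [Units.val_mul, ← hφP1, hφP2]
    have hrel := hinj hCeq
    have hηfin : c' = η (u*t) * η u * δ := by
      rcases hη u with h1|h1 <;> rcases hδ with hh2|hh2 <;> rw [h1, hh2] at hrel ⊢ <;>
        linarith [hrel]
    rw [hc', hηfin]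
  -- part 2
  have p2 : ∀ u v t : ↥T, Kmem comp X t → β (u * v) t = β u t * β v t := by
    intro u v t ht
    have hcu : ∀ x : D, β u t * x = x * β u t := by
      rcases p1 u t ht with h|h <;> rw [h] <;> intro x <;> simp
    have hcv : ∀ x : D, β v t * x = x * β v t := by
      rcases p1 v t ht with h|h <;> rw [h] <;> intro x <;> simp
    have hcuv : ∀ x : D, (β u t * β v t) * x = x * (β u t * β v t) := fun x => by
      rw [mul_assoc, hcv, ← mul_assoc, hcu, mul_assoc]
    have hPinv_mem : (((X u * X v)⁻¹ : Dˣ) : D) ∈ comp ((u:G)*(v:G)) := by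
      rw [mul_inv_rev, Units.val_mul]
      have hm := hmul _ _ _ _ (hXinvmem v) (hXinvmem u)
      rwa [mul_comm (v:G) (u:G)] at hm
    set e : D := (X (u*v) : D) * (((X u * X v)⁻¹ : Dˣ) : D) with hedef
    have heE : e ∈ comp (1:G) := by
      have hm := hmul _ _ _ _ (hX (u*v)) hPinv_mem
      rwa [show ((u*v : ↥T):G) * ((u:G)*(v:G)) = 1 from by simpa using h2 (u*v)] at hm
    have heX : e * ((X u:D) * (X v:D)) = (X (u*v) : D) := by
      calc e * ((X u:D)*(X v:D))
          = (X (u*v):D) * ((((X u * X v)⁻¹ : Dˣ):D) * (((X u * X v : Dˣ)):D)) := by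
            rw [hedef, Units.val_mul, mul_assoc]
        _ = (X (u*v):D) := by rw [Units.inv_mul, mul_one]
    have het : (X t:D) * e = e * (X t:D) := ht e heE
    have main : (X (u*v):D) * (X t:D) = (β u t * β v t) * ((X t:D) * (X (u*v):D)) := by
      calc (X (u*v):D) * (X t:D)
          = e * ((X u:D) * ((X v:D) * (X t:D))) := by rw [← heX]; simp only [mul_assoc]
        _ = e * ((X u:D) * (β v t * ((X t:D)*(X v:D)))) := by rw [hβ v t ht]
        _ = e * ((β v t * (X u:D)) * ((X t:D)*(X v:D))) := by rw [← mul_assoc (X u:D), ← hcv]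
        _ = e * (β v t * (((X u:D) * (X t:D))*(X v:D))) := by simp only [mul_assoc]
        _ = e * (β v t * ((β u t * ((X t:D) * (X u:D)))*(X v:D))) := by rw [hβ u t ht]
        _ = e * ((β v t * β u t) * (((X t:D) * (X u:D))*(X v:D))) := by simp only [mul_assoc]
        _ = e * ((β u t * β v t) * (((X t:D) * (X u:D))*(X v:D))) := by
            rw [show β v t * β u t = β u t * β v t from (hcu (β v t)).symm]
        _ = (e * (β u t * β v t)) * (((X t:D) * (X u:D))*(X v:D)) := by rw [← mul_assoc]
        _ = ((β u t * β v t) * e) * (((X t:D) * (X u:D))*(X v:D)) := by rw [← hcuv]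
        _ = (β u t * β v t) * ((e * (X t:D)) * ((X u:D)*(X v:D))) := by simp only [mul_assoc]
        _ = (β u t * β v t) * (((X t:D) * e) * ((X u:D)*(X v:D))) := by rw [het]
        _ = (β u t * β v t) * ((X t:D) * (e * ((X u:D)*(X v:D)))) := by simp only [mul_assoc]
        _ = (β u t * β v t) * ((X t:D) * (X (u*v):D)) := by rw [heX]
    have hb := hβ (u*v) t ht
    refine hcanR (X t * X (u*v)) _ _ ?_
    rw [Units.val_mul, ← hb, main]
  -- part 4
  have p4 : (∀ u : ↥T, ¬Kmem comp X u → η u = μ u) → ∀ t : ↥T, η t = μ t := by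
    intro hEM t
    by_cases ht : Kmem comp X t
    · obtain ⟨u, hu⟩ := hKproper
      have hut : ¬Kmem comp X (u*t) := by
        intro h
        apply hu
        have hm := hKmul (u*t) t h ht
        rwa [mul_assoc, h2' t, mul_one] at hm
      obtain ⟨e1, e2⟩ := p3 u t hu ht
      have hC' : C (μ (u*t) * μ u * μ t) = C (η (u*t) * η u * δ) := by rw [← e1, e2]
      have hreal := hinj hC'
      rw [hEM (u*t) hut, hEM u hu] at hreal
      have hμt : μ t = δ := by
        rcases hμ (u*t) with h|h <;> rcases hμ u with h'|h' <;> rw [h, h'] at hreal <;> linarith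
      rw [hKη t ht, hμt]
    · exact hEM t ht
  exact ⟨p1, p2, p3, p4⟩
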